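/- (Tight per-observation surrogate bound.) Let q ∈ {-1, 1} and let x, x₀ be real numbers. Define z₀ = x₀ + 4·q·(1 - π(q·x₀)), where π(u) = exp(u)/(exp(u)+1). Then -log(π(q·x)) ≤ -log(π(q·x₀)) + (1/8)·((x - z₀)² - (x₀ - z₀)²), with equality when x = x₀. -/

import Mathlib

/-- The logistic function π(u) = exp(u)/(exp(u)+1). -/
noncomputable def logistic (x : ℝ) : ℝ := Real.exp x / (Real.exp x + 1)

lemma exp_add_one_pos (u : ℝ) : 0 < Real.exp u + 1 := by positivity

lemma logistic_pos (u : ℝ) : 0 < logistic u :=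
  div_pos (Real.exp_pos u) (exp_add_one_pos u)

lemma logistic_lt_one (u : ℝ) : logistic u < 1 := by
  rw [logistic, div_lt_one (exp_add_one_pos u)]; linarith [Real.exp_pos u]

lemma hasDerivAt_logistic (u : ℝ) :
    HasDerivAt logistic (logistic u * (1 - logistic u)) u := by
  have h := (Real.hasDerivAt_exp u).div ((Real.hasDerivAt_exp u).add_const 1)
      (ne_of_gt (exp_add_one_pos u))
  refine h.congr_deriv ?_
  have h1 := (exp_add_one_pos u).ne'
  simp only [logistic]
  field_simp

lemma H_mono : Monotone (fun u : ℝ => u / 4 - logistic u) := by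
  have hd : ∀ u : ℝ, HasDerivAt (fun u : ℝ => u / 4 - logistic u)
      (1 / 4 - logistic u * (1 - logistic u)) u := by
    intro u
    have := ((hasDerivAt_id u).div_const 4).sub (hasDerivAt_logistic u)
    exact this
  apply monotone_of_deriv_nonneg (fun u => (hd u).differentiableAt)
  intro u
  rw [(hd u).deriv]
  nlinarith [logistic_pos u, logistic_lt_one u, sq_nonneg (logistic u - 1 / 2)]

lemma neg_log_logistic (u : ℝ) :
    -Real.log (logistic u) = Real.log (Real.exp u + 1) - u := by
  rw [logistic, Real.log_div (Real.exp_pos u).ne' (exp_add_one_pos u).ne', Real.log_exp]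
  ring

lemma hasDerivAt_F (u : ℝ) :
    HasDerivAt (fun u => Real.log (Real.exp u + 1) - u) (logistic u - 1) u := by
  have h := (((Real.hasDerivAt_exp u).add_const 1).log (exp_add_one_pos u).ne').sub
      (hasDerivAt_id u)
  exact h

lemma key (u u₀ : ℝ) :
    -Real.log (logistic u) ≤ -Real.log (logistic u₀)
      + (logistic u₀ - 1) * (u - u₀) + (1 / 8) * (u - u₀) ^ 2 := by
  rw [neg_log_logistic, neg_log_logistic]
  set F : ℝ → ℝ := fun v => Real.log (Real.exp v + 1) - v with hF
  set G : ℝ → ℝ := fun v =>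
    F u₀ + (logistic u₀ - 1) * (v - u₀) + (1 / 8) * (v - u₀) ^ 2 - F v with hG
  have hGd : ∀ v, HasDerivAt G ((v / 4 - logistic v) - (u₀ / 4 - logistic u₀)) v := by
    intro v
    have ha : HasDerivAt (fun v : ℝ => v - u₀) 1 v := (hasDerivAt_id v).sub_const u₀
    have h1 := (((ha.const_mul (logistic u₀ - 1)).const_add (F u₀)).add
      ((ha.pow 2).const_mul (1 / 8))).sub (hasDerivAt_F v)
    refine h1.congr_deriv ?_
    push_cast
    ring
  have hG0 : G u₀ = 0 := by simp [hG]
  have hdiff : Differentiable ℝ G := fun v => (hGd v).differentiableAt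
  have h0le : 0 ≤ G u := by
    rcases le_total u₀ u with h | h
    · have hm := monotoneOn_of_deriv_nonneg (convex_Ici u₀) hdiff.continuous.continuousOn
        hdiff.differentiableOn ?_
      · have := hm (Set.self_mem_Ici) (h : u ∈ Set.Ici u₀) h
        linarith
      · intro x hx
        rw [(hGd x).deriv]
        have hx' : u₀ ≤ x := le_of_lt (by simpa using hx)
        have := H_mono hx'
        simpa using sub_nonneg.2 this
    · have hm := antitoneOn_of_deriv_nonpos (convex_Iic u₀) hdiff.continuous.continuousOn
        hdiff.differentiableOn ?_
      · have := hm (h : u ∈ Set.Iic u₀) (Set.self_mem_Iic) h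
        linarith
      · intro x hx
        rw [(hGd x).deriv]
        have hx' : x ≤ u₀ := le_of_lt (by simpa using hx)
        have := H_mono hx'
        simpa using sub_nonpos.2 this
  simp only [hG] at h0le
  linarith

/-- Tight per-observation surrogate bound. For q ∈ {-1,1} and
z₀ = x₀ + 4q(1 - π(q x₀)),
-log(π(qx)) ≤ -log(π(qx₀)) + (1/8)((x - z₀)² - (x₀ - z₀)²), with equality
when x = x₀. -/
theorem per_observation_tight_surrogate_bound (q x x₀ : ℝ)
    (hq : q = -1 ∨ q = 1) :
    (-Real.log (logistic (q * x)) ≤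
      -Real.log (logistic (q * x₀))
        + (1 / 8) * ((x - (x₀ + 4 * q * (1 - logistic (q * x₀)))) ^ 2
            - (x₀ - (x₀ + 4 * q * (1 - logistic (q * x₀)))) ^ 2)) ∧
    (x = x₀ →
      -Real.log (logistic (q * x)) =
        -Real.log (logistic (q * x₀))
          + (1 / 8) * ((x - (x₀ + 4 * q * (1 - logistic (q * x₀)))) ^ 2
              - (x₀ - (x₀ + 4 * q * (1 - logistic (q * x₀)))) ^ 2)) := by
  constructor
  · have hk := key (q * x) (q * x₀)
    refine le_trans hk (le_of_eq ?_)
    rcases hq with h | h <;> subst h <;> ring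
  · intro h; subst h; ring
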